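/- Let G be a finitely generated abelian group and γ₁, …, γ_r ∈ G. Then the submonoid ⟨γ₁, …, γ_r⟩ = {c₁γ₁ + ⋯ + c_rγ_r : c_i ∈ ℕ} of G can be written as a finite DISJOINT union ⟨γ₁, …, γ_r⟩ = ⨆_{j=1}^s ( σ_j + ⟨E_j⟩ ), where each σ_j ∈ ⟨γ₁, …, γ_r⟩, each E_j ⊆ {γ₁, …, γ_r} is a ℤ-linearly independent subset (possibly empty), and ⟨E_j⟩ is the (free) submonoid of G generated by E_j. -/

import Mathlib

namespace SDU

/-- A translated coordinate cone in `ℕ^r`. -/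
def piece {r : ℕ} (a : Fin r → ℕ) (F : Finset (Fin r)) : Set (Fin r → ℕ) :=
  {c | a ≤ c ∧ ∀ i ∉ F, c i = a i}

lemma self_mem_piece {r : ℕ} (a : Fin r → ℕ) (F : Finset (Fin r)) : a ∈ piece a F :=
  ⟨le_refl _, fun _ _ => rfl⟩

lemma piece_eq_image {r : ℕ} (a : Fin r → ℕ) (F : Finset (Fin r)) :
    piece a F = (fun d => a + d) '' {d | ∀ i ∉ F, d i = 0} := by
  ext c
  constructor
  · rintro ⟨h1, h2⟩
    refine ⟨fun i => c i - a i, fun i hi => by simp [h2 i hi], ?_⟩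
    funext i
    simp [Nat.add_sub_cancel' (h1 i)]
  · rintro ⟨d, hd, rfl⟩
    exact ⟨fun i => Nat.le_add_right _ _, fun i hi => by simp [hd i hi]⟩

lemma cons_le_cons_iff {r : ℕ} (k k' : ℕ) (a c : Fin r → ℕ) :
    (Fin.cons k a : Fin (r+1) → ℕ) ≤ (Fin.cons k' c : Fin (r+1) → ℕ) ↔ k ≤ k' ∧ a ≤ c := by
  constructor
  · intro h
    refine ⟨by simpa using h 0, fun i => by simpa using h i.succ⟩
  · rintro ⟨h1, h2⟩ i
    refine Fin.cases ?_ ?_ i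
    · simpa using h1
    · intro j; simpa using h2 j

lemma cons_le_iff {r : ℕ} (k : ℕ) (a : Fin r → ℕ) (c : Fin (r+1) → ℕ) :
    (Fin.cons k a : Fin (r+1) → ℕ) ≤ c ↔ k ≤ c 0 ∧ a ≤ Fin.tail c := by
  conv_lhs => rw [← Fin.cons_self_tail c]
  exact cons_le_cons_iff k (c 0) a (Fin.tail c)

lemma piece_cons_lt {r : ℕ} (k : ℕ) (a : Fin r → ℕ) (F : Finset (Fin r)) :
    piece (Fin.cons k a) (F.map (Fin.succEmb r)) =
      {c | c 0 = k ∧ (Fin.tail c : Fin r → ℕ) ∈ piece a F} := by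
  ext c
  simp only [piece, Set.mem_setOf_eq, cons_le_iff]
  constructor
  · rintro ⟨⟨h1, h2⟩, h3⟩
    have h0 : c 0 = k := by
      have := h3 0 (by simp [Fin.succEmb, Fin.ext_iff])
      simpa using this
    refine ⟨h0, h2, fun i hi => ?_⟩
    have := h3 i.succ (by simp [Fin.succEmb, hi])
    simpa [Fin.tail] using this
  · rintro ⟨h0, h1, h2⟩
    refine ⟨⟨le_of_eq h0.symm, h1⟩, fun i => ?_⟩
    refine Fin.cases ?_ ?_ i
    · intro _; simpa using h0
    · intro j hj
      have hjF : j ∉ F := by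
        intro hjF
        exact hj (by simpa [Fin.succEmb] using Finset.mem_map_of_mem (Fin.succEmb r) hjF)
      simpa [Fin.tail] using h2 j hjF

lemma piece_cons_ge {r : ℕ} (k : ℕ) (a : Fin r → ℕ) (F : Finset (Fin r)) :
    piece (Fin.cons k a) (insert 0 (F.map (Fin.succEmb r))) =
      {c | k ≤ c 0 ∧ (Fin.tail c : Fin r → ℕ) ∈ piece a F} := by
  ext c
  simp only [piece, Set.mem_setOf_eq, cons_le_iff]
  constructor
  · rintro ⟨⟨h1, h2⟩, h3⟩
    refine ⟨h1, h2, fun i hi => ?_⟩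
    have := h3 i.succ (by simp [Fin.succEmb, hi, Fin.succ_ne_zero])
    simpa [Fin.tail] using this
  · rintro ⟨h0, h1, h2⟩
    refine ⟨⟨h0, h1⟩, fun i => ?_⟩
    refine Fin.cases ?_ ?_ i
    · intro h; exact absurd (Finset.mem_insert_self _ _) h
    · intro j hj
      have hjF : j ∉ F := by
        intro hjF
        exact hj (Finset.mem_insert_of_mem
          (by simpa [Fin.succEmb] using Finset.mem_map_of_mem (Fin.succEmb r) hjF))
      simpa [Fin.tail] using h2 j hjF

lemma stabilizes {r : ℕ} (Mk : ℕ → Set (Fin r → ℕ))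
    (hanti : ∀ k, Mk (k+1) ⊆ Mk k)
    (hdown : ∀ k, ∀ c ∈ Mk k, ∀ c' ≤ c, c' ∈ Mk k) :
    ∃ N, ∀ k, N ≤ k → Mk k = Mk N := by
  have hanti' : ∀ {k l}, k ≤ l → Mk l ⊆ Mk k := by
    intro k l h
    induction h with
    | refl => exact subset_rfl
    | step h ih => exact fun x hx => ih (hanti _ hx)
  by_contra hcon
  push_neg at hcon
  have key : ∀ N, ∃ k, N ≤ k ∧ Mk (k+1) ≠ Mk k := by
    intro N
    by_contra hall
    push_neg at hall
    have hconst : ∀ m, Mk (N + m) = Mk N := by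
      intro m
      induction m with
      | zero => rfl
      | succ m ih => rw [← Nat.add_assoc, hall (N + m) (Nat.le_add_right _ _), ih]
    obtain ⟨kk, hk1, hk2⟩ := hcon N
    have := hconst (kk - N)
    rw [Nat.add_sub_cancel' hk1] at this
    exact hk2 this
  have key2 : ∀ N, ∃ k, N ≤ k ∧ (Mk k \ Mk (k+1)).Nonempty := by
    intro N
    obtain ⟨k, hk1, hk2⟩ := key N
    refine ⟨k, hk1, ?_⟩
    rcases Set.not_subset.1 (fun hsub => hk2 (Set.Subset.antisymm (hanti k) hsub)) with ⟨x, hx, hx'⟩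
    exact ⟨x, hx, hx'⟩
  have key3 : ∀ N, ∃ k, N ≤ k ∧ ∃ x, x ∈ Mk k ∧ x ∉ Mk (k+1) := by
    intro N
    obtain ⟨k, hk1, ⟨x, hx1, hx2⟩⟩ := key2 N
    exact ⟨k, hk1, x, hx1, hx2⟩
  choose k hk x hx1 hx2 using key3
  -- build a strictly increasing subsequence
  let m : ℕ → ℕ := fun j => Nat.rec 0 (fun _ mj => k mj + 1) j
  have hmsucc : ∀ j, m (j+1) = k (m j) + 1 := fun j => rfl
  have hstep : ∀ j, k (m j) + 1 ≤ k (m (j+1)) := by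
    intro j
    have := hk (m (j+1))
    rwa [hmsucc j] at this
  have hmono : ∀ i j, i < j → k (m i) + 1 ≤ k (m j) := by
    intro i j hij
    induction j with
    | zero => omega
    | succ j ih =>
      rcases Nat.lt_succ_iff_lt_or_eq.1 hij with h | h
      · exact le_trans (ih h) (le_trans (Nat.le_succ _) (hstep j))
      · subst h; exact hstep i
  have hpwo : (Set.univ : Set (Fin r → ℕ)).IsPWO :=
    Set.isPWO_of_wellQuasiOrderedLE Set.univ
  obtain ⟨i, j, hij, hle⟩ :=
    (Set.isPWO_univ_iff.1 hpwo).wqo (fun j => x (m j))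
  have : x (m j) ∈ Mk (k (m i) + 1) := hanti' (hmono i j hij) (hx1 (m j))
  exact hx2 (m i) (hdown _ _ this _ hle)

theorem stanley (r : ℕ) (M : Set (Fin r → ℕ)) (hdown : ∀ c ∈ M, ∀ c' ≤ c, c' ∈ M) :
    ∃ (J : Type) (_ : Fintype J) (a : J → (Fin r → ℕ)) (F : J → Finset (Fin r)),
      (∀ j, a j ∈ M) ∧ (M = ⋃ j, piece (a j) (F j)) ∧
      (∀ j j', j ≠ j' → Disjoint (piece (a j) (F j)) (piece (a j') (F j'))) := by
  induction r with
  | zero =>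
    by_cases h : M.Nonempty
    · obtain ⟨x, hx⟩ := h
      refine ⟨PUnit, inferInstance, fun _ => x, fun _ => ∅, fun _ => hx, ?_, ?_⟩
      · ext c
        have hcx : c = x := Subsingleton.elim c x
        subst hcx
        simp only [Set.mem_iUnion]
        exact ⟨fun _ => ⟨PUnit.unit, le_refl _, fun _ _ => rfl⟩, fun _ => hx⟩
      · intro j j' hne; exact absurd (Subsingleton.elim j j') hne
    · refine ⟨PEmpty, inferInstance, fun j => j.elim, fun j => j.elim, fun j => j.elim, ?_, ?_⟩
      · rw [Set.not_nonempty_iff_eq_empty.1 h, Set.iUnion_of_empty]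
      · intro j; exact j.elim
  | succ r ih =>
    set Mk : ℕ → Set (Fin r → ℕ) := fun k => {c | (Fin.cons k c : Fin (r+1) → ℕ) ∈ M} with hMkdef
    have hMdown : ∀ k, ∀ c ∈ Mk k, ∀ c' ≤ c, c' ∈ Mk k := fun k c hc c' h =>
      hdown _ hc _ ((cons_le_cons_iff k k c' c).2 ⟨le_rfl, h⟩)
    have hanti : ∀ k, Mk (k+1) ⊆ Mk k := fun k c hc =>
      hdown _ hc _ ((cons_le_cons_iff k (k+1) c c).2 ⟨Nat.le_succ _, le_rfl⟩)
    obtain ⟨N, hN⟩ := stabilizes Mk hanti hMdown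
    choose J instJ a F hmem hequ hdisj using fun k : ℕ => ih (Mk k) (hMdown k)
    letI : ∀ k, Fintype (J k) := instJ
    have hsub : ∀ k j, piece (a k j) (F k j) ⊆ Mk k := by
      intro k j
      rw [hequ k]
      exact Set.subset_iUnion (fun j => piece (a k j) (F k j)) j
    refine ⟨(Σ k : Fin N, J k) ⊕ J N, inferInstance,
      Sum.elim (fun p => Fin.cons (p.1 : ℕ) (a p.1 p.2)) (fun j => Fin.cons N (a N j)),
      Sum.elim (fun p => (F (p.1 : ℕ) p.2).map (Fin.succEmb r))
        (fun j => insert 0 ((F N j).map (Fin.succEmb r))), ?_, ?_, ?_⟩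
    · rintro (⟨k, j⟩ | j)
      · exact hmem k j
      · exact hmem N j
    · ext c
      simp only [Set.mem_iUnion]
      constructor
      · intro hc
        have htail : (Fin.tail c : Fin r → ℕ) ∈ Mk (c 0) := by
          show (Fin.cons (c 0) (Fin.tail c) : Fin (r+1) → ℕ) ∈ M
          rwa [Fin.cons_self_tail]
        by_cases h : c 0 < N
        · have := (hequ (c 0)) ▸ htail
          rw [Set.mem_iUnion] at this
          obtain ⟨j, hj⟩ := this
          refine ⟨Sum.inl ⟨⟨c 0, h⟩, j⟩, ?_⟩
          rw [Sum.elim_inl, Sum.elim_inl, piece_cons_lt]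
          exact ⟨rfl, hj⟩
        · push_neg at h
          have htail' : (Fin.tail c : Fin r → ℕ) ∈ Mk N := (hN (c 0) h) ▸ htail
          have := (hequ N) ▸ htail'
          rw [Set.mem_iUnion] at this
          obtain ⟨j, hj⟩ := this
          refine ⟨Sum.inr j, ?_⟩
          rw [Sum.elim_inr, Sum.elim_inr, piece_cons_ge]
          exact ⟨h, hj⟩
      · rintro ⟨(⟨k, j⟩ | j), hj⟩
        · rw [Sum.elim_inl, Sum.elim_inl, piece_cons_lt] at hj
          obtain ⟨h0, htail⟩ := hj
          have : (Fin.tail c : Fin r → ℕ) ∈ Mk (c 0) := h0 ▸ hsub _ j htail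
          show c ∈ M
          rw [← Fin.cons_self_tail c]
          exact this
        · rw [Sum.elim_inr, Sum.elim_inr, piece_cons_ge] at hj
          obtain ⟨h0, htail⟩ := hj
          have : (Fin.tail c : Fin r → ℕ) ∈ Mk (c 0) := (hN (c 0) h0).symm ▸ hsub _ j htail
          show c ∈ M
          rw [← Fin.cons_self_tail c]
          exact this
    · rintro (⟨k, j⟩ | j) (⟨k', j'⟩ | j') hne <;>
        rw [Set.disjoint_left] <;> intro c hc hc' <;>
        simp only [Sum.elim_inl, Sum.elim_inr, piece_cons_lt, piece_cons_ge,
          Set.mem_setOf_eq] at hc hc'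
      · -- inl inl
        obtain ⟨e0, ht⟩ := hc
        obtain ⟨e0', ht'⟩ := hc'
        have hkk' : k = k' := Fin.ext (by rw [← e0, ← e0'])
        subst hkk'
        have hjj' : j ≠ j' := by
          intro h; subst h; exact hne rfl
        exact Set.disjoint_left.1 (hdisj (k : ℕ) j j' hjj') ht ht'
      · -- inl inr
        obtain ⟨e0, -⟩ := hc
        obtain ⟨h0, -⟩ := hc'
        have := k.isLt
        omega
      · obtain ⟨h0, -⟩ := hc
        obtain ⟨e0, -⟩ := hc'
        have := k'.isLt
        omega
      · obtain ⟨-, ht⟩ := hc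
        obtain ⟨-, ht'⟩ := hc'
        have hjj' : j ≠ j' := by
          intro h; subst h; exact hne rfl
        exact Set.disjoint_left.1 (hdisj N j j' hjj') ht ht'

variable {G : Type*} [AddCommMonoid G] {r : ℕ}

/-- The evaluation map `ℕ^r → G`. -/
def phi (γv : Fin r → G) (c : Fin r → ℕ) : G := ∑ i, c i • γv i

lemma phi_add (γv : Fin r → G) (c d : Fin r → ℕ) :
    phi γv (c + d) = phi γv c + phi γv d := by
  simp [phi, add_smul, Finset.sum_add_distrib]

lemma phi_single (γv : Fin r → G) (i : Fin r) : phi γv (Pi.single i 1) = γv i := by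
  simp only [phi, Pi.single_apply, ite_smul, one_smul, zero_smul]
  rw [Finset.sum_ite_eq' Finset.univ i γv]
  simp

/-- Membership in the closure of the image of a finset of indices. -/
lemma mem_closure_image_iff (γv : Fin r → G) (F : Finset (Fin r)) (x : G) :
    x ∈ AddSubmonoid.closure (γv '' ↑F) ↔
      ∃ c : Fin r → ℕ, (∀ i ∉ F, c i = 0) ∧ x = phi γv c := by
  constructor
  · intro hx
    refine AddSubmonoid.closure_induction ?_ ?_ ?_ hx
    · rintro g ⟨i, hi, rfl⟩
      refine ⟨Pi.single i 1, fun j hj => ?_, (phi_single γv i).symm⟩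
      rcases eq_or_ne j i with h | h
      · subst h; exact absurd (Finset.mem_coe.1 hi) hj
      · simp [Pi.single_apply, h]
    · exact ⟨0, fun i _ => rfl, by simp [phi]⟩
    · rintro x y - - ⟨c, hc, rfl⟩ ⟨d, hd, rfl⟩
      exact ⟨c + d, fun i hi => by simp [hc i hi, hd i hi], (phi_add γv c d).symm⟩
  · rintro ⟨c, hc, rfl⟩
    refine AddSubmonoid.sum_mem _ (fun i _ => ?_)
    by_cases h : i ∈ F
    · exact AddSubmonoid.nsmul_mem _ (AddSubmonoid.subset_closure (Set.mem_image_of_mem γv (Finset.mem_coe.2 h))) _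
    · simp [hc i h]

lemma mem_closure_range_iff (γv : Fin r → G) (x : G) :
    x ∈ AddSubmonoid.closure (Set.range γv) ↔ ∃ c : Fin r → ℕ, x = phi γv c := by
  have : Set.range γv = γv '' ↑(Finset.univ : Finset (Fin r)) := by simp
  rw [this, mem_closure_image_iff]
  constructor
  · rintro ⟨c, -, rfl⟩; exact ⟨c, rfl⟩
  · rintro ⟨c, rfl⟩; exact ⟨c, fun i hi => absurd (Finset.mem_univ i) hi, rfl⟩

lemma toLex_add_lt (e c c' : Fin r → ℕ) (h : toLex c < toLex c') :
    toLex (c + e) < toLex (c' + e) := by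
  obtain ⟨i, h1, h2⟩ := h
  exact ⟨i, fun j hj => by have : c j = c' j := h1 j hj; simp [this], by simpa using h2⟩

section
variable {r : ℕ}

lemma lex_trichotomy (x y : Lex (Fin r → ℕ)) :
    @LT.lt _ Pi.instLTLexForall x y ∨ x = y ∨ @LT.lt _ Pi.instLTLexForall y x := by
  have h : IsTrichotomous (Lex (Fin r → ℕ)) (Pi.Lex (· < ·) (@fun _ => (· < ·))) :=
    Pi.isTrichotomous_lex _ _ (IsWellFounded.wf)
  exact @trichotomous _ _ h x y

lemma lex_irrefl (x : Lex (Fin r → ℕ)) : ¬ @LT.lt _ Pi.instLTLexForall x x := by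
  rintro ⟨i, -, h⟩
  exact lt_irrefl _ h

lemma lex_not_le_of_lt {x y : Lex (Fin r → ℕ)} (h : @LT.lt _ Pi.instLTLexForall x y) :
    ¬ y ≤ x := by
  intro hle
  have hle' : y = x ∨ @LT.lt _ Pi.instLTLexForall y x := hle
  rcases hle' with rfl | h2
  · exact lex_irrefl _ h
  · have htrans := (Pi.Lex.isStrictOrder (β := fun _ : Fin r => ℕ)).toIsTrans
    exact lex_irrefl x (htrans.trans _ _ _ h h2)

lemma lex_lt_of_not_le {x y : Lex (Fin r → ℕ)} (h : ¬ y ≤ x) :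
    @LT.lt _ Pi.instLTLexForall x y := by
  rcases lex_trichotomy x y with h1 | h1 | h1
  · exact h1
  · exact absurd (Or.inl h1.symm : y = x ∨ @LT.lt _ Pi.instLTLexForall y x) h
  · exact absurd (Or.inr h1 : y = x ∨ @LT.lt _ Pi.instLTLexForall y x) h

lemma lex_le_of_not_lt {x y : Lex (Fin r → ℕ)} (h : ¬ @LT.lt _ Pi.instLTLexForall x y) :
    y ≤ x := by
  rcases lex_trichotomy x y with h1 | h1 | h1
  · exact absurd h1 h
  · exact (Or.inl h1.symm : y = x ∨ @LT.lt _ Pi.instLTLexForall y x)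
  · exact (Or.inr h1 : y = x ∨ @LT.lt _ Pi.instLTLexForall y x)
end

end SDU
/-- **Lemma (disjoint decomposition of finitely generated submonoids).**
Let `G` be a finitely generated abelian group and `γ₁,…,γ_r ∈ G`.  Then the submonoid
`⟨γ₁,…,γ_r⟩` is a finite *disjoint* union `⨆_j (σ_j + ⟨E_j⟩)`, where each
`σ_j ∈ ⟨γ₁,…,γ_r⟩` and each `E_j ⊆ {γ₁,…,γ_r}` is a `ℤ`-linearly independent subset
(possibly empty), `⟨E_j⟩` being the free submonoid it generates. -/
theorem submonoid_eq_disjoint_union_of_translated_free_submonoids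
    {G : Type*} [AddCommGroup G] [AddGroup.FG G] {r : ℕ} (γv : Fin r → G) :
    ∃ (s : ℕ) (σ : Fin s → G) (E : Fin s → Finset G),
      (∀ j, σ j ∈ AddSubmonoid.closure (Set.range γv)) ∧
      (∀ j, (E j : Set G) ⊆ Set.range γv) ∧
      (∀ j, LinearIndependent ℤ (fun g : (E j : Set G) => (g : G))) ∧
      ((AddSubmonoid.closure (Set.range γv) : AddSubmonoid G) : Set G) =
        ⋃ j, (fun g => σ j + g) ''
          ((AddSubmonoid.closure (E j : Set G) : AddSubmonoid G) : Set G) ∧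
      (∀ j j', j ≠ j' →
        Disjoint
          ((fun g => σ j + g) ''
            ((AddSubmonoid.closure (E j : Set G) : AddSubmonoid G) : Set G))
          ((fun g => σ j' + g) ''
            ((AddSubmonoid.closure (E j' : Set G) : AddSubmonoid G) : Set G))) := by
  classical
  -- the set of lex-minimal representatives ("normal forms")
  set M : Set (Fin r → ℕ) :=
    {c | ∀ c', SDU.phi γv c' = SDU.phi γv c → toLex c ≤ toLex c'} with hMdef
  have hMexists : ∀ c : Fin r → ℕ, ∃ m ∈ M, SDU.phi γv m = SDU.phi γv c := by
    intro c
    have wf : WellFounded ((· < ·) : Lex (Fin r → ℕ) → Lex (Fin r → ℕ) → Prop) :=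
      IsWellFounded.wf
    have hne : {x : Lex (Fin r → ℕ) | SDU.phi γv (ofLex x) = SDU.phi γv c}.Nonempty :=
      ⟨toLex c, rfl⟩
    set S := {x : Lex (Fin r → ℕ) | SDU.phi γv (ofLex x) = SDU.phi γv c} with hS
    refine ⟨ofLex (wf.min S hne), ?_, wf.min_mem S hne⟩
    intro c' hc'
    have hc'S : toLex c' ∈ S := by
      show SDU.phi γv c' = SDU.phi γv c
      rw [hc']
      exact wf.min_mem S hne
    exact SDU.lex_le_of_not_lt (wf.not_lt_min S hc'S)
  have hMinj : ∀ c ∈ M, ∀ c' ∈ M, SDU.phi γv c = SDU.phi γv c' → c = c' := by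
    intro c hc c' hc' h
    exact toLex_inj.1 (le_antisymm (hc c' h.symm) (hc' c h))
  have hMdown : ∀ c ∈ M, ∀ c' ≤ c, c' ∈ M := by
    intro c hc c' hle c'' h
    by_contra hlt'
    have hlt := SDU.lex_lt_of_not_le hlt'
    set e : Fin r → ℕ := fun i => c i - c' i with he
    have hce : c' + e = c := funext fun i => Nat.add_sub_cancel' (hle i)
    have h1 : toLex (c'' + e) < toLex (c' + e) := SDU.toLex_add_lt e c'' c' hlt
    rw [hce] at h1
    have h2 : SDU.phi γv (c'' + e) = SDU.phi γv c := by
      rw [SDU.phi_add, h, ← SDU.phi_add, hce]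
    exact (SDU.lex_not_le_of_lt h1) (hc _ h2)
  obtain ⟨J, instJ, a, F, hamem, heq, hdisj⟩ := SDU.stanley r M hMdown
  letI : Fintype J := instJ
  have hsubM : ∀ k : J, SDU.piece (a k) (F k) ⊆ M := by
    intro k
    rw [heq]
    exact Set.subset_iUnion (fun k => SDU.piece (a k) (F k)) k
  have hinj2 : ∀ k : J, ∀ d d' : Fin r → ℕ, (∀ i ∉ F k, d i = 0) → (∀ i ∉ F k, d' i = 0) →
      SDU.phi γv d = SDU.phi γv d' → d = d' := by
    intro k d d' hd hd' hphi
    have h1 : a k + d ∈ SDU.piece (a k) (F k) := by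
      rw [SDU.piece_eq_image]; exact ⟨d, hd, rfl⟩
    have h2 : a k + d' ∈ SDU.piece (a k) (F k) := by
      rw [SDU.piece_eq_image]; exact ⟨d', hd', rfl⟩
    have h3 := hMinj _ (hsubM k h1) _ (hsubM k h2)
      (by rw [SDU.phi_add, SDU.phi_add, hphi])
    funext i
    have := congrFun h3 i
    simpa using Nat.add_left_cancel this
  have hγinj : ∀ k : J, ∀ i ∈ F k, ∀ i' ∈ F k, γv i = γv i' → i = i' := by
    intro k i hi i' hi' hγ
    by_contra hne
    have hs1 : ∀ jj, jj ∉ F k → (Pi.single i 1 : Fin r → ℕ) jj = 0 := fun jj hjj =>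
      Pi.single_eq_of_ne (fun hh => hjj (by rw [hh]; exact hi)) 1
    have hs2 : ∀ jj, jj ∉ F k → (Pi.single i' 1 : Fin r → ℕ) jj = 0 := fun jj hjj =>
      Pi.single_eq_of_ne (fun hh => hjj (by rw [hh]; exact hi')) 1
    have := hinj2 k (Pi.single i 1 : Fin r → ℕ) (Pi.single i' 1 : Fin r → ℕ) hs1 hs2
      (by rw [SDU.phi_single, SDU.phi_single, hγ])
    have := congrFun this i
    simp [Pi.single_apply, hne, Ne.symm hne] at this
  -- the images of the pieces
  have himg : ∀ k : J,
      (fun g => SDU.phi γv (a k) + g) ''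
        ((AddSubmonoid.closure (((F k).image γv : Finset G) : Set G) : AddSubmonoid G) : Set G)
      = SDU.phi γv '' SDU.piece (a k) (F k) := by
    intro k
    have h1 : ((AddSubmonoid.closure (((F k).image γv : Finset G) : Set G) :
        AddSubmonoid G) : Set G) = SDU.phi γv '' {d | ∀ i ∉ F k, d i = 0} := by
      ext x
      rw [SetLike.mem_coe, Finset.coe_image, SDU.mem_closure_image_iff]
      constructor
      · rintro ⟨c, hc, rfl⟩; exact ⟨c, hc, rfl⟩
      · rintro ⟨c, hc, rfl⟩; exact ⟨c, hc, rfl⟩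
    rw [h1, SDU.piece_eq_image, Set.image_image, Set.image_image]
    exact Set.image_congr fun d _ => (SDU.phi_add γv (a k) d).symm
  have hclM : ((AddSubmonoid.closure (Set.range γv) : AddSubmonoid G) : Set G)
      = SDU.phi γv '' M := by
    ext x
    rw [SetLike.mem_coe, SDU.mem_closure_range_iff]
    constructor
    · rintro ⟨c, rfl⟩
      obtain ⟨m, hm, hm2⟩ := hMexists c
      exact ⟨m, hm, hm2⟩
    · rintro ⟨c, -, rfl⟩
      exact ⟨c, rfl⟩
  set s := Fintype.card J with hs
  set ee : Fin s ≃ J := (Fintype.equivFin J).symm with hee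
  refine ⟨s, fun j => SDU.phi γv (a (ee j)), fun j => (F (ee j)).image γv, ?_, ?_, ?_, ?_, ?_⟩
  · intro j
    exact (SDU.mem_closure_range_iff γv _).2 ⟨a (ee j), rfl⟩
  · intro j
    rw [Finset.coe_image]
    exact Set.image_subset_range γv _
  · -- linear independence
    intro j
    refine (linearIndependent_subtype_iff.trans linearIndepOn_iff).2 ?_
    intro l hl hsum0
    rw [Finsupp.mem_supported] at hl
    have hsupp : ∀ g ∈ l.support, g ∈ (F (ee j)).image γv := fun g hg =>
      Finset.mem_coe.1 (hl hg)
    rw [Finsupp.linearCombination_apply, Finsupp.sum] at hsum0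
    have hsumE : ∑ g ∈ (F (ee j)).image γv, l g • g = 0 := by
      rw [← hsum0]
      refine (Finset.sum_subset hsupp ?_).symm
      intro g _ hg
      rw [Finsupp.notMem_support_iff.1 hg, zero_smul]
    rw [Finset.sum_image (hγinj (ee j))] at hsumE
    set m : Fin r → ℤ := fun i => if i ∈ F (ee j) then l (γv i) else 0 with hm
    have hsumU : ∑ i : Fin r, m i • γv i = 0 := by
      rw [show ∑ i : Fin r, m i • γv i
            = ∑ i : Fin r, if i ∈ F (ee j) then l (γv i) • γv i else 0 from
          Finset.sum_congr rfl (fun i _ => by by_cases h : i ∈ F (ee j) <;> simp [hm, h]),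
        Finset.sum_ite_mem, Finset.univ_inter, hsumE]
    have hsplit : ∀ i, m i = ((m i).toNat : ℤ) - ((-(m i)).toNat : ℤ) := fun i => by omega
    have hphieq : SDU.phi γv (fun i => (m i).toNat) = SDU.phi γv (fun i => (-(m i)).toNat) := by
      have h0 : (∑ i : Fin r, ((m i).toNat : ℤ) • γv i)
          - ∑ i : Fin r, ((-(m i)).toNat : ℤ) • γv i = 0 := by
        rw [← Finset.sum_sub_distrib, ← hsumU]
        refine Finset.sum_congr rfl fun i _ => ?_
        rw [← sub_smul, ← hsplit]
      have h1 := sub_eq_zero.1 h0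
      simpa only [SDU.phi, natCast_zsmul] using h1
    have hdz : (fun i => (m i).toNat) = (fun i => (-(m i)).toNat) := by
      refine hinj2 (ee j) _ _ ?_ ?_ hphieq
      · intro i hi; simp [hm, hi]
      · intro i hi; simp [hm, hi]
    have hm0 : ∀ i, m i = 0 := by
      intro i
      have := congrFun hdz i
      omega
    ext g
    by_cases hg : g ∈ (F (ee j)).image γv
    · obtain ⟨i, hiF, rfl⟩ := Finset.mem_image.1 hg
      have := hm0 i
      rw [hm] at this
      simp only [if_pos hiF] at this
      simpa using this
    · have : g ∉ l.support := fun h => hg (hsupp g h)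
      simpa using Finsupp.notMem_support_iff.1 this
  · -- the union
    calc ((AddSubmonoid.closure (Set.range γv) : AddSubmonoid G) : Set G)
        = SDU.phi γv '' M := hclM
      _ = SDU.phi γv '' ⋃ k : J, SDU.piece (a k) (F k) := by rw [← heq]
      _ = ⋃ k : J, SDU.phi γv '' SDU.piece (a k) (F k) := Set.image_iUnion
      _ = ⋃ j : Fin s, SDU.phi γv '' SDU.piece (a (ee j)) (F (ee j)) :=
          (ee.surjective.iUnion_comp fun k => SDU.phi γv '' SDU.piece (a k) (F k)).symm
      _ = _ := Set.iUnion_congr fun j => (himg (ee j)).symm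
  · -- disjointness
    intro j j' hne
    rw [himg (ee j), himg (ee j')]
    rw [Set.disjoint_left]
    rintro x ⟨c, hc, rfl⟩ ⟨c', hc', hphi⟩
    have hcc' : c = c' := hMinj _ (hsubM _ hc) _ (hsubM _ hc') hphi.symm
    subst hcc'
    have hkne : ee j ≠ ee j' := fun h => hne (ee.injective h)
    exact Set.disjoint_left.1 (hdisj (ee j) (ee j') hkne) hc hc'
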